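/- Let p be a prime, G a group, and z ∈ G a central element of order p. Let m̂₁ ∈ G have order p and m̂₂ ∈ G have order p² with m̂₂^p ∈ ⟨z⟩; suppose their commutator lies in ⟨z⟩ and their images m₁, m₂ in G/⟨z⟩ generate a subgroup of order p². Then ⟨m̂₁, m̂₂⟩ is isomorphic either to ℤ/p²ℤ × ℤ/pℤ or to U_p. -/

import Mathlib

lemma one_add_sq_zero_pow {R : Type*} [CommRing R] (x : R) (hx : x * x = 0) (n : ℕ) :
    (1 + x) ^ n = 1 + (n : R) * x := by
  induction n with
  | zero => simp
  | succ n ih =>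
      calc (1 + x) ^ (n + 1) = (1 + (n : R) * x) * (1 + x) := by rw [pow_succ, ih]
        _ = 1 + ((n : R) + 1) * x + (n : R) * (x * x) := by ring
        _ = 1 + (((n : ℕ) + 1 : ℕ) : R) * x := by rw [hx, mul_zero, add_zero]; push_cast; ring

/-- The unit `1 + p` of `ℤ/p²ℤ`. -/
def upUnit (p : ℕ) : (ZMod (p ^ 2))ˣ :=
  ZMod.unitOfCoprime (1 + p) ((Nat.coprime_add_self_left.mpr (Nat.coprime_one_left p)).pow_right 2)

lemma upUnit_pow (p : ℕ) : upUnit p ^ p = 1 := by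
  ext
  have hx : (p : ZMod (p ^ 2)) * p = 0 := by
    have h : ((p ^ 2 : ℕ) : ZMod (p ^ 2)) = 0 := ZMod.natCast_self _
    push_cast at h
    rw [← h]; ring
  rw [Units.val_pow_eq_pow_val, Units.val_one]
  rw [show ((upUnit p : ZMod (p ^ 2))) = ((1 + p : ℕ) : ZMod (p ^ 2)) from
    ZMod.coe_unitOfCoprime _ _]
  push_cast
  rw [one_add_sq_zero_pow _ hx p, hx, add_zero]

/-- Additive automorphisms of `M` as multiplicative automorphisms of `Multiplicative M`. -/
def addAutToMulAut (M : Type*) [AddGroup M] : Multiplicative (AddAut M) →* MulAut (Multiplicative M) :=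
  MonoidHom.mk' (fun f => AddEquiv.toMultiplicative f.toAdd) (fun _ _ => MulEquiv.ext fun _ => rfl)

/-- The action of `ℤ/pℤ` on `ℤ/p²ℤ` in which the generator `1` acts by multiplication
by `1 + p`. -/
def upAction (p : ℕ) : Multiplicative (ZMod p) →* MulAut (Multiplicative (ZMod (p ^ 2))) :=
  (addAutToMulAut (ZMod (p ^ 2))).comp
    ((AddAut.mulLeft).comp
      (AddMonoidHom.toMultiplicativeLeft
        (ZMod.lift p ⟨zmultiplesHom (Additive (ZMod (p ^ 2))ˣ) (Additive.ofMul (upUnit p)),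
          by
            simp only [zmultiplesHom_apply]
            rw [← ofMul_zpow]
            norm_cast
            rw [upUnit_pow p, ofMul_one]⟩)))

/-- `U_p = ℤ/p²ℤ ⋊ ℤ/pℤ`, a generator of `ℤ/pℤ` acting by multiplication by `1 + p`. -/
abbrev Up (p : ℕ) : Type _ :=
  (Multiplicative (ZMod (p ^ 2))) ⋊[upAction p] (Multiplicative (ZMod p))

/-- The cyclic subgroup generated by a central element is normal. -/
theorem zpowers_normal_of_mem_center {G : Type*} [Group G] {z : G}
    (hz : z ∈ Subgroup.center G) : (Subgroup.zpowers z).Normal := by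
  constructor
  intro n hn g
  obtain ⟨k, rfl⟩ := hn
  have hc : Commute g z := Subgroup.mem_center_iff.mp hz g
  refine ⟨k, ?_⟩
  rw [(hc.zpow_right k).eq, mul_inv_cancel_right]


/-- Two monoid homs out of `Multiplicative (ZMod n)` agreeing at `ofAdd 1` are equal. -/
lemma zmodMulHom_ext {n : ℕ} {M : Type*} [Group M] {f g : Multiplicative (ZMod n) →* M}
    (h : f (Multiplicative.ofAdd 1) = g (Multiplicative.ofAdd 1)) : f = g := by
  refine MonoidHom.ext fun x => ?_
  obtain ⟨a, rfl⟩ : ∃ a : ZMod n, Multiplicative.ofAdd a = x := ⟨Multiplicative.toAdd x, rfl⟩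
  obtain ⟨k, rfl⟩ := ZMod.intCast_surjective a
  have : Multiplicative.ofAdd ((k : ZMod n)) = (Multiplicative.ofAdd (1 : ZMod n)) ^ k := by
    rw [← ofAdd_zsmul]; simp
  rw [this, map_zpow, map_zpow, h]

/-- The monoid hom `Multiplicative (ZMod n) →* G` sending the generator to `g` with `g ^ n = 1`. -/
def zmodHom {G : Type*} [Group G] (n : ℕ) (g : G) (h : g ^ n = 1) :
    Multiplicative (ZMod n) →* G :=
  AddMonoidHom.toMultiplicativeLeft
    (ZMod.lift n ⟨zmultiplesHom (Additive G) (Additive.ofMul g), by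
      simp only [zmultiplesHom_apply]
      rw [← ofMul_zpow]
      norm_cast⟩)

lemma zmodHom_intCast {G : Type*} [Group G] (n : ℕ) (g : G) (h : g ^ n = 1) (k : ℤ) :
    zmodHom n g h (Multiplicative.ofAdd ((k : ZMod n))) = g ^ k := by
  show Additive.toMul (ZMod.lift n _ ((k : ZMod n))) = g ^ k
  rw [ZMod.lift_coe]
  simp [zmultiplesHom_apply, toMul_zsmul]

lemma zmodHom_natCast {G : Type*} [Group G] (n : ℕ) (g : G) (h : g ^ n = 1) (k : ℕ) :
    zmodHom n g h (Multiplicative.ofAdd ((k : ZMod n))) = g ^ k := by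
  have := zmodHom_intCast n g h (k : ℤ)
  push_cast at this
  rw [this, zpow_natCast]

lemma zmodHom_apply {G : Type*} [Group G] (n : ℕ) [NeZero n] (g : G) (h : g ^ n = 1)
    (x : Multiplicative (ZMod n)) : zmodHom n g h x = g ^ (Multiplicative.toAdd x).val := by
  have : x = Multiplicative.ofAdd (((Multiplicative.toAdd x).val : ℕ) : ZMod n) := by
    simp [ZMod.natCast_val, ZMod.cast_id]
  rw [this, zmodHom_natCast]
  simp [ZMod.natCast_val, ZMod.cast_id]


lemma upAction_natCast (p : ℕ) (k : ℕ) (a : ZMod (p ^ 2)) :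
    upAction p (Multiplicative.ofAdd ((k : ZMod p))) (Multiplicative.ofAdd a) =
      Multiplicative.ofAdd ((((upUnit p ^ k : (ZMod (p ^ 2))ˣ) : ZMod (p ^ 2))) * a) := by
  have : ((k : ℤ) : ZMod p) = (k : ZMod p) := by push_cast; rfl
  show Multiplicative.ofAdd ((Additive.toMul (ZMod.lift p _ (k : ZMod p)) : (ZMod (p ^ 2))ˣ) • a) = _
  rw [← this, ZMod.lift_coe]
  simp [zmultiplesHom_apply, toMul_zsmul, Units.smul_def]


lemma keyA {Q : Type*} [Group Q] {p : ℕ} (hp : p.Prime) {q1 q2 : Q}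
    (hq1 : q1 ^ p = 1) (hq2 : q2 ^ p = 1)
    (hcard : Nat.card (Subgroup.closure ({q1, q2} : Set Q)) = p ^ 2) :
    ∀ A B : ℕ, q2 ^ A * q1 ^ B = 1 → p ∣ A ∧ p ∣ B := by
  haveI := Fact.mk hp
  have hcontra : ∀ x : Q, x ^ p = 1 →
      ¬ (Subgroup.closure ({q1, q2} : Set Q) ≤ Subgroup.zpowers x) := by
    intro x hx hle
    have hd1 : (p : ℕ) ^ 2 ∣ Nat.card (Subgroup.zpowers x) := by
      rw [← hcard]; exact Subgroup.card_dvd_of_le hle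
    rw [Nat.card_zpowers] at hd1
    have hd2 : orderOf x ∣ p := orderOf_dvd_of_pow_eq_one hx
    have hd4 : p ^ 2 ≤ p := Nat.le_of_dvd hp.pos (hd1.trans hd2)
    nlinarith [hp.two_le]
  intro A B hAB
  have hB : p ∣ B := by
    by_contra hB
    have hco : (B : ZMod p) ≠ 0 := by
      simpa [ZMod.natCast_eq_zero_iff] using hB
    set b' := ((B : ZMod p)⁻¹).val with hb'
    have hmod : B * b' ≡ 1 [MOD p] := by
      rw [← ZMod.natCast_eq_natCast_iff]
      push_cast
      rw [hb', ZMod.natCast_val, ZMod.cast_id]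
      field_simp
    have hq1pow : (q1 ^ B) ^ b' = q1 := by
      rw [← pow_mul]
      conv_rhs => rw [← pow_one q1]
      rw [pow_eq_pow_iff_modEq]
      exact Nat.ModEq.of_dvd (orderOf_dvd_of_pow_eq_one hq1) hmod
    have h₁ : q1 ^ B = (q2 ^ A)⁻¹ := (inv_eq_of_mul_eq_one_right hAB).symm
    have hq1mem : q1 ∈ Subgroup.zpowers q2 := by
      rw [← hq1pow, h₁]
      exact Subgroup.pow_mem _
        (Subgroup.inv_mem _ (Subgroup.pow_mem _ (Subgroup.mem_zpowers q2) A)) b'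
    refine hcontra q2 hq2 ?_
    rw [Subgroup.closure_le]
    intro y hy
    simp only [Set.mem_insert_iff, Set.mem_singleton_iff] at hy
    rcases hy with rfl | rfl
    · exact hq1mem
    · exact Subgroup.mem_zpowers _
  have hq1B1 : q1 ^ B = 1 := by
    obtain ⟨e, rfl⟩ := hB
    rw [pow_mul, hq1, one_pow]
  have hq2A : q2 ^ A = 1 := by rwa [hq1B1, mul_one] at hAB
  have hordA : orderOf q2 ∣ A := orderOf_dvd_of_pow_eq_one hq2A
  have hord : orderOf q2 ∣ p := orderOf_dvd_of_pow_eq_one hq2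
  rcases hp.eq_one_or_self_of_dvd _ hord with h | h
  · exfalso
    have hq2one : q2 = 1 := orderOf_eq_one_iff.mp h
    apply hcontra q1 hq1
    rw [Subgroup.closure_le]
    intro y hy
    simp only [Set.mem_insert_iff, Set.mem_singleton_iff] at hy
    rcases hy with rfl | rfl
    · exact Subgroup.mem_zpowers _
    · rw [hq2one]; exact Subgroup.one_mem _
  · exact ⟨h ▸ hordA, hB⟩

/-- Let `p` be a prime, `G` a group, `z ∈ G` central of order `p`.  Let
`m̂₁ ∈ G` have order `p` and `m̂₂ ∈ G` have order `p²` with `m̂₂^p ∈ ⟨z⟩`; suppose their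
commutator lies in `⟨z⟩` and their images in `G/⟨z⟩` generate a subgroup of order `p²`.
Then `⟨m̂₁, m̂₂⟩` is isomorphic to `ℤ/p²ℤ × ℤ/pℤ` or to `U_p`. -/
theorem lift_of_order_p_and_order_p_squared_generate_ZpsqxZp_or_Up
    (p : ℕ) (hp : p.Prime) {G : Type*} [Group G] (z m1 m2 : G)
    (hz : z ∈ Subgroup.center G) (hzord : orderOf z = p)
    (h1 : orderOf m1 = p) (h2 : orderOf m2 = p ^ 2)
    (h2p : m2 ^ p ∈ Subgroup.zpowers z)
    (hcomm : m1⁻¹ * m2⁻¹ * m1 * m2 ∈ Subgroup.zpowers z) :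
    letI := zpowers_normal_of_mem_center hz
    Nat.card (Subgroup.closure
        {(QuotientGroup.mk m1 : G ⧸ Subgroup.zpowers z), QuotientGroup.mk m2}) = p ^ 2 →
    Nonempty (Subgroup.closure ({m1, m2} : Set G) ≃*
        (Multiplicative (ZMod (p ^ 2)) × Multiplicative (ZMod p))) ∨
    Nonempty (Subgroup.closure ({m1, m2} : Set G) ≃* Up p) := by
  haveI fp := Fact.mk hp
  haveI : NeZero p := ⟨hp.ne_zero⟩
  haveI : Fact (1 < p) := ⟨hp.one_lt⟩
  haveI : Fact (1 < p ^ 2) := ⟨by nlinarith [hp.two_le]⟩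
  haveI : NeZero (p ^ 2) := ⟨pow_ne_zero _ hp.ne_zero⟩
  letI := zpowers_normal_of_mem_center hz
  intro hQ
  set π : G →* G ⧸ Subgroup.zpowers z := QuotientGroup.mk' (Subgroup.zpowers z) with hπdef
  obtain ⟨d, hd⟩ := h2p
  obtain ⟨c, hc⟩ := hcomm
  beta_reduce at hd hc
  have hm1p : m1 ^ p = 1 := by rw [← h1]; exact pow_orderOf_eq_one m1
  have hm2p2 : m2 ^ p ^ 2 = 1 := by rw [← h2]; exact pow_orderOf_eq_one m2
  have hcom : ∀ g : G, Commute g z := fun g => Subgroup.mem_center_iff.mp hz g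
  have hm1m2 : m1 * m2 = m2 * m1 * z ^ c := by rw [hc]; group
  have hπz : π z = 1 := (QuotientGroup.eq_one_iff z).mpr (Subgroup.mem_zpowers z)
  have hq1p : (π m1) ^ p = 1 := by rw [← map_pow, hm1p, map_one]
  have hq2p : (π m2) ^ p = 1 := by rw [← map_pow, ← hd, map_zpow, hπz, one_zpow]
  have hQ' : Nat.card (Subgroup.closure ({π m1, π m2} :
      Set (G ⧸ Subgroup.zpowers z))) = p ^ 2 := hQ
  have key := keyA hp hq1p hq2p hQ'
  have hzp : z ^ (p : ℕ) = 1 := by rw [← hzord]; exact pow_orderOf_eq_one z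
  have hzmod : ∀ a b : ℤ, ((a : ZMod p) = (b : ZMod p)) → z ^ a = z ^ b := by
    intro a b hab
    rw [zpow_eq_zpow_iff_modEq, hzord]
    exact (ZMod.intCast_eq_intCast_iff _ _ _).mp hab
  have hdp : (d : ZMod p) ≠ 0 := by
    intro h0
    obtain ⟨e, rfl⟩ := (ZMod.intCast_zmod_eq_zero_iff_dvd _ _).mp h0
    have hm2p1 : m2 ^ p = 1 := by
      rw [← hd, zpow_mul, zpow_natCast, hzp, one_zpow]
    have := orderOf_dvd_of_pow_eq_one hm2p1
    rw [h2] at this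
    have := Nat.le_of_dvd hp.pos this
    nlinarith [hp.two_le]
  -- membership helpers
  have hm1mem : m1 ∈ Subgroup.closure ({m1, m2} : Set G) :=
    Subgroup.subset_closure (by simp)
  have hm2mem : m2 ∈ Subgroup.closure ({m1, m2} : Set G) :=
    Subgroup.subset_closure (by simp)
  by_cases hab : (c : ZMod p) = 0
  · -- abelian case
    left
    have hzc1 : z ^ c = 1 := by
      have := hzmod c 0 (by simpa using hab)
      simpa using this
    have hcomm' : Commute m2 m1 := by
      have : m1 * m2 = m2 * m1 := by rw [hm1m2, hzc1, mul_one]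
      exact this.symm
    set f₁ := zmodHom (p ^ 2) m2 hm2p2 with hf₁def
    set f₂ := zmodHom p m1 hm1p with hf₂def
    have hcommf : ∀ x y, Commute (f₁ x) (f₂ y) := by
      intro x y
      rw [hf₁def, hf₂def, zmodHom_apply, zmodHom_apply]
      exact hcomm'.pow_pow _ _
    set ψ : Multiplicative (ZMod (p ^ 2)) × Multiplicative (ZMod p) →* G :=
      MonoidHom.noncommCoprod f₁ f₂ hcommf with hψdef
    have hψ : ∀ x : Multiplicative (ZMod (p ^ 2)) × Multiplicative (ZMod p),
        ψ x = m2 ^ (Multiplicative.toAdd x.1).val * m1 ^ (Multiplicative.toAdd x.2).val := by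
      intro x
      rw [hψdef, MonoidHom.noncommCoprod_apply, hf₁def, hf₂def, zmodHom_apply, zmodHom_apply]
    have hinj : Function.Injective ψ := by
      rw [injective_iff_map_eq_one]
      intro x hx
      rw [hψ] at hx
      have hxq : (π m2) ^ (Multiplicative.toAdd x.1).val *
          (π m1) ^ (Multiplicative.toAdd x.2).val = 1 := by
        have := congrArg π hx
        simpa [map_mul, map_pow] using this
      obtain ⟨hA, hB⟩ := key _ _ hxq
      have hBv : (Multiplicative.toAdd x.2).val = 0 :=
        Nat.eq_zero_of_dvd_of_lt hB (ZMod.val_lt _)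
      have hx2 : x.2 = 1 := by
        have h0 : Multiplicative.toAdd x.2 = 0 := by rwa [← ZMod.val_eq_zero]
        have := congrArg Multiplicative.ofAdd h0
        simpa using this
      rw [hBv, pow_zero, mul_one] at hx
      have hAv : (Multiplicative.toAdd x.1).val = 0 := by
        have := orderOf_dvd_of_pow_eq_one hx
        rw [h2] at this
        exact Nat.eq_zero_of_dvd_of_lt this (ZMod.val_lt _)
      have hx1 : x.1 = 1 := by
        have h0 : Multiplicative.toAdd x.1 = 0 := by rwa [← ZMod.val_eq_zero]
        have := congrArg Multiplicative.ofAdd h0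
        simpa using this
      rw [Prod.ext_iff]
      exact ⟨hx1, hx2⟩
    have hrange : ψ.range = Subgroup.closure ({m1, m2} : Set G) := by
      apply le_antisymm
      · rintro g ⟨x, rfl⟩
        rw [hψ]
        exact mul_mem (pow_mem hm2mem _) (pow_mem hm1mem _)
      · have hm1r : m1 ∈ ψ.range := ⟨(1, Multiplicative.ofAdd 1), by rw [hψ]; simp [ZMod.val_one]⟩
        have hm2r : m2 ∈ ψ.range := ⟨(Multiplicative.ofAdd 1, 1), by rw [hψ]; simp [ZMod.val_one]⟩
        rw [Subgroup.closure_le]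
        intro y hy
        simp only [Set.mem_insert_iff, Set.mem_singleton_iff] at hy
        rcases hy with rfl | rfl
        · exact hm1r
        · exact hm2r
      
    exact ⟨((MonoidHom.ofInjective hinj).trans (MulEquiv.subgroupCongr hrange)).symm⟩
  · -- nonabelian case
    right
    set t : ℕ := ((d : ZMod p) * (c : ZMod p)⁻¹).val with htdef
    have htc : ((t : ℕ) : ZMod p) = (d : ZMod p) * (c : ZMod p)⁻¹ := by
      rw [htdef]; simp [ZMod.natCast_val, ZMod.cast_id]
    have htz : ((t : ℕ) : ZMod p) ≠ 0 := by
      rw [htc]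
      exact mul_ne_zero hdp (inv_ne_zero hab)
    have htcd : ((t : ℕ) : ZMod p) * (c : ZMod p) = (d : ZMod p) := by
      rw [htc, mul_assoc, inv_mul_cancel₀ hab, mul_one]
    have hztc : z ^ ((t : ℤ) * c) = z ^ d := by
      apply hzmod
      push_cast
      rw [htcd]
    set w : G := m1 ^ t with hwdef
    have hwp : w ^ p = 1 := by rw [hwdef, ← pow_mul, mul_comm, pow_mul, hm1p, one_pow]
    have hconj1 : m1 * m2 * m1⁻¹ = m2 * z ^ c := by
      have h' := ((hcom m1⁻¹).zpow_right c).eq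
      calc m1 * m2 * m1⁻¹ = m2 * m1 * z ^ c * m1⁻¹ := by rw [hm1m2]
        _ = m2 * m1 * (z ^ c * m1⁻¹) := by rw [mul_assoc (m2 * m1)]
        _ = m2 * m1 * (m1⁻¹ * z ^ c) := by rw [← h']
        _ = m2 * z ^ c := by group
    have hconjn : ∀ n : ℕ, m1 ^ n * m2 * (m1 ^ n)⁻¹ = m2 * z ^ ((n : ℤ) * c) := by
      intro n
      induction n with
      | zero => simp
      | succ n ih =>
        have hstep : m1 ^ (n + 1) * m2 * (m1 ^ (n + 1))⁻¹ =
            m1 * (m1 ^ n * m2 * (m1 ^ n)⁻¹) * m1⁻¹ := by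
          rw [pow_succ']; group
        rw [hstep, ih]
        have h' := ((hcom m1⁻¹).zpow_right ((n : ℤ) * c)).eq
        calc m1 * (m2 * z ^ ((n : ℤ) * c)) * m1⁻¹
            = m1 * m2 * (z ^ ((n : ℤ) * c) * m1⁻¹) := by group
          _ = m1 * m2 * (m1⁻¹ * z ^ ((n : ℤ) * c)) := by rw [← h']
          _ = (m1 * m2 * m1⁻¹) * z ^ ((n : ℤ) * c) := by group
          _ = m2 * z ^ c * z ^ ((n : ℤ) * c) := by rw [hconj1]
          _ = m2 * z ^ (((n : ℕ) + 1 : ℤ) * c) := by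
              rw [mul_assoc, ← zpow_add]; ring_nf
          _ = m2 * z ^ (((n + 1 : ℕ) : ℤ) * c) := by push_cast; ring_nf
    have hwm2 : w * m2 * w⁻¹ = m2 ^ (1 + p) := by
      rw [hwdef, hconjn t, hztc, hd, pow_add, pow_one]
    have hconjpow : ∀ n s : ℕ, w ^ n * m2 ^ s * (w ^ n)⁻¹ = m2 ^ (s * (1 + p) ^ n) := by
      intro n
      induction n with
      | zero => intro s; simp
      | succ n ih =>
        intro s
        have hstep : w ^ (n + 1) * m2 ^ s * (w ^ (n + 1))⁻¹ =
            w * (w ^ n * m2 ^ s * (w ^ n)⁻¹) * w⁻¹ := by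
          rw [pow_succ']; group
        rw [hstep, ih s, ← conj_pow, hwm2, ← pow_mul]
        congr 1
        ring
    set f₁ := zmodHom (p ^ 2) m2 hm2p2 with hf₁def
    set f₂ := zmodHom p w hwp with hf₂def
    have hcompat : ∀ g : Multiplicative (ZMod p),
        f₁.comp ((upAction p g).toMonoidHom) =
          (MulAut.conj (f₂ g)).toMonoidHom.comp f₁ := by
      intro g
      apply zmodMulHom_ext
      set n := (Multiplicative.toAdd g).val with hndef
      have hg : g = Multiplicative.ofAdd ((n : ZMod p)) := by
        rw [hndef]; simp [ZMod.natCast_val, ZMod.cast_id]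
      simp only [MonoidHom.comp_apply, MulEquiv.coe_toMonoidHom]
      rw [hg, upAction_natCast, mul_one]
      have hcoe : ((upUnit p ^ n : (ZMod (p ^ 2))ˣ) : ZMod (p ^ 2)) =
          (((1 + p) ^ n : ℕ) : ZMod (p ^ 2)) := by
        rw [Units.val_pow_eq_pow_val]
        rw [show ((upUnit p : ZMod (p ^ 2))) = ((1 + p : ℕ) : ZMod (p ^ 2)) from
          ZMod.coe_unitOfCoprime _ _]
        push_cast
        ring
      rw [hcoe, hf₁def, zmodHom_natCast]
      rw [MulAut.conj_apply]
      have hf2g : f₂ (Multiplicative.ofAdd ((n : ZMod p))) = w ^ n := by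
        rw [hf₂def, zmodHom_natCast]
      have hf11 : zmodHom (p ^ 2) m2 hm2p2 (Multiplicative.ofAdd (1 : ZMod (p ^ 2))) = m2 := by
        rw [zmodHom_apply]
        simp [ZMod.val_one]
      rw [hf2g, hf11]
      have hcp := hconjpow n 1
      rw [pow_one] at hcp
      rw [hcp, one_mul]
    set ψ : Up p →* G := SemidirectProduct.lift f₁ f₂ hcompat with hψdef
    have hψ : ∀ x : Up p,
        ψ x = m2 ^ (Multiplicative.toAdd x.left).val * w ^ (Multiplicative.toAdd x.right).val := by
      intro x
      have h0 : ψ x = f₁ x.left * f₂ x.right := rfl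
      rw [h0, hf₁def, hf₂def, zmodHom_apply, zmodHom_apply]
    have hπw : π w = (π m1) ^ t := by rw [hwdef, map_pow]
    have hinj : Function.Injective ψ := by
      rw [injective_iff_map_eq_one]
      intro x hx
      rw [hψ] at hx
      have hxq : (π m2) ^ (Multiplicative.toAdd x.left).val *
          (π m1) ^ (t * (Multiplicative.toAdd x.right).val) = 1 := by
        have := congrArg π hx
        simpa [map_mul, map_pow, hπw, ← pow_mul] using this
      obtain ⟨hA, hB⟩ := key _ _ hxq
      have hBv : (Multiplicative.toAdd x.right).val = 0 := by
        have hpt : ¬ (p ∣ t) := by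
          intro hdvd
          exact htz ((ZMod.natCast_eq_zero_iff _ _).mpr hdvd)
        have : p ∣ (Multiplicative.toAdd x.right).val :=
          (hp.dvd_mul.mp hB).resolve_left hpt
        exact Nat.eq_zero_of_dvd_of_lt this (ZMod.val_lt _)
      have hx2 : x.right = 1 := by
        have h0 : Multiplicative.toAdd x.right = 0 := by rwa [← ZMod.val_eq_zero]
        have := congrArg Multiplicative.ofAdd h0
        simpa using this
      rw [hBv, pow_zero, mul_one] at hx
      have hAv : (Multiplicative.toAdd x.left).val = 0 := by
        have := orderOf_dvd_of_pow_eq_one hx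
        rw [h2] at this
        exact Nat.eq_zero_of_dvd_of_lt this (ZMod.val_lt _)
      have hx1 : x.left = 1 := by
        have h0 : Multiplicative.toAdd x.left = 0 := by rwa [← ZMod.val_eq_zero]
        have := congrArg Multiplicative.ofAdd h0
        simpa using this
      have hxsp : x = SemidirectProduct.inl x.left * SemidirectProduct.inr x.right :=
        (SemidirectProduct.inl_left_mul_inr_right x).symm
      rw [hxsp, hx1, hx2]
      simp
    have hrange : ψ.range = Subgroup.closure ({m1, m2} : Set G) := by
      apply le_antisymm
      · rintro g ⟨x, rfl⟩
        rw [hψ]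
        exact mul_mem (pow_mem hm2mem _) (pow_mem (pow_mem hm1mem _) _)
      · have hm1r : m1 ∈ ψ.range := by
          refine ⟨SemidirectProduct.inr (Multiplicative.ofAdd ((t : ZMod p)⁻¹)), ?_⟩
          rw [hψ]
          have hl : (Multiplicative.toAdd
              ((SemidirectProduct.inr (G := Multiplicative (ZMod p)) (φ := upAction p)
                (Multiplicative.ofAdd ((t : ZMod p)⁻¹))).left)).val = 0 := by
            simp
          rw [hl, pow_zero, one_mul]
          have hr : (SemidirectProduct.inr (N := Multiplicative (ZMod (p ^ 2))) (φ := upAction p)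
              (Multiplicative.ofAdd ((t : ZMod p)⁻¹))).right =
              Multiplicative.ofAdd ((t : ZMod p)⁻¹) := rfl
          rw [hr, hwdef, ← pow_mul]
          have hmod : t * ((t : ZMod p)⁻¹).val ≡ 1 [MOD p] := by
            rw [← ZMod.natCast_eq_natCast_iff]
            push_cast
            rw [ZMod.natCast_val, ZMod.cast_id]
            rw [← htc]
            simpa [ZMod.natCast_val, ZMod.cast_id] using mul_inv_cancel₀ htz
          have : m1 ^ (t * (Multiplicative.toAdd (Multiplicative.ofAdd
              ((t : ZMod p)⁻¹))).val) = m1 ^ 1 := by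
            rw [pow_eq_pow_iff_modEq, h1]
            simpa using hmod
          rw [this, pow_one]
        have hm2r : m2 ∈ ψ.range := by
          refine ⟨SemidirectProduct.inl (Multiplicative.ofAdd (1 : ZMod (p ^ 2))), ?_⟩
          rw [hψ]
          have hl : (SemidirectProduct.inl (G := Multiplicative (ZMod p)) (φ := upAction p)
              (Multiplicative.ofAdd (1 : ZMod (p ^ 2)))).left =
              Multiplicative.ofAdd (1 : ZMod (p ^ 2)) := rfl
          have hr : (Multiplicative.toAdd ((SemidirectProduct.inl (φ := upAction p)
              (Multiplicative.ofAdd (1 : ZMod (p ^ 2)))).right)).val = 0 := by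
            simp
          rw [hl, hr, pow_zero, mul_one]
          simp [ZMod.val_one]
        rw [Subgroup.closure_le]
        intro y hy
        simp only [Set.mem_insert_iff, Set.mem_singleton_iff] at hy
        rcases hy with rfl | rfl
        · exact hm1r
        · exact hm2r
    exact ⟨((MonoidHom.ofInjective hinj).trans (MulEquiv.subgroupCongr hrange)).symm⟩
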